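/- Let $A \in \mathbb{R}^{d \times d}$ be a nonnegative matrix and define $h(A) = \mathrm{Tr}\, e^A - d$. Then $h(A) \geq 0$, and $h(A) = 0$ if and only if the directed graph with edge set $\{(i,j) : A_{ij} > 0\}$ is acyclic. Moreover, if the graph has a directed cycle of length $k$, then $h(A) \geq \frac{1}{k!}\prod_{\text{edges }(i,j)\text{ on the cycle}} A_{ij} > 0$. -/

import Mathlib

/-- A directed graph on `Fin d`, given by an edge relation, is acyclic if it contains no
nonempty closed directed walk. -/
def DiGraphAcyclic {d : ℕ} (E : Fin d → Fin d → Prop) : Prop :=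
  ¬ ∃ (k : ℕ) (v : ℕ → Fin d), 1 ≤ k ∧ v k = v 0 ∧ ∀ i < k, E (v i) (v (i + 1))

lemma pow_entry_nonneg {d : ℕ} (A : Matrix (Fin d) (Fin d) ℝ)
    (hA : ∀ i j, 0 ≤ A i j) : ∀ (n : ℕ) (i j : Fin d), 0 ≤ (A ^ n) i j := by
  intro n
  induction n with
  | zero =>
    intro i j
    simp only [pow_zero, Matrix.one_apply]
    split <;> norm_num
  | succ n ih =>
    intro i j
    rw [pow_succ, Matrix.mul_apply]
    exact Finset.sum_nonneg fun m _ => mul_nonneg (ih i m) (hA m j)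

lemma prod_le_pow_entry {d : ℕ} (A : Matrix (Fin d) (Fin d) ℝ)
    (hA : ∀ i j, 0 ≤ A i j) : ∀ (k : ℕ) (v : ℕ → Fin d),
    (∏ i ∈ Finset.range k, A (v i) (v (i + 1))) ≤ (A ^ k) (v 0) (v k) := by
  intro k
  induction k with
  | zero => intro v; simp [Matrix.one_apply]
  | succ k ih =>
    intro v
    rw [pow_succ, Matrix.mul_apply, Finset.prod_range_succ]
    calc (∏ i ∈ Finset.range k, A (v i) (v (i + 1))) * A (v k) (v (k + 1))
        ≤ (A ^ k) (v 0) (v k) * A (v k) (v (k + 1)) := by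
          apply mul_le_mul_of_nonneg_right (ih v) (hA _ _)
      _ ≤ ∑ m : Fin d, (A ^ k) (v 0) m * A m (v (k + 1)) := by
          apply Finset.single_le_sum (f := fun m => (A ^ k) (v 0) m * A m (v (k + 1)))
            (fun m _ => mul_nonneg (pow_entry_nonneg A hA k _ _) (hA _ _))
            (Finset.mem_univ (v k))

lemma pos_pow_entry_walk {d : ℕ} (A : Matrix (Fin d) (Fin d) ℝ)
    (hA : ∀ i j, 0 ≤ A i j) : ∀ (n : ℕ) (i j : Fin d), 0 < (A ^ n) i j →
    ∃ v : ℕ → Fin d, v 0 = i ∧ v n = j ∧ ∀ t < n, 0 < A (v t) (v (t + 1)) := by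
  intro n
  induction n with
  | zero =>
    intro i j h
    simp only [pow_zero, Matrix.one_apply] at h
    split at h
    · exact ⟨fun _ => i, rfl, by simp [*], fun t ht => absurd ht (Nat.not_lt_zero t)⟩
    · norm_num at h
  | succ n ih =>
    intro i j h
    rw [pow_succ, Matrix.mul_apply] at h
    have : ∃ m : Fin d, 0 < (A ^ n) i m * A m j := by
      by_contra hc
      push_neg at hc
      have : (∑ m : Fin d, (A ^ n) i m * A m j) ≤ 0 :=
        Finset.sum_nonpos fun m _ => hc m
      linarith
    obtain ⟨m, hm⟩ := this
    have h1 : 0 < (A ^ n) i m :=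
      lt_of_le_of_ne (pow_entry_nonneg A hA n i m) (by
        intro he; rw [← he] at hm; simp at hm)
    have h2 : 0 < A m j := by
      by_contra hc
      push_neg at hc
      have : A m j = 0 := le_antisymm hc (hA m j)
      rw [this, mul_zero] at hm; exact lt_irrefl 0 hm
    obtain ⟨v, hv0, hvn, hvw⟩ := ih i m h1
    refine ⟨fun t => if t ≤ n then v t else j, by simp [hv0], by simp, ?_⟩
    intro t ht
    rcases Nat.lt_or_ge t n with h' | h'
    · simpa [Nat.le_of_lt h', Nat.succ_le_of_lt h'] using hvw t h'
    · have : t = n := Nat.le_antisymm (Nat.lt_succ_iff.mp ht) h'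
      subst this
      simpa [hvn] using h2

/-- For a nonnegative matrix `A`, `h(A) = Tr e^A - d` is nonnegative, vanishes iff the graph
of positive entries is acyclic, and is bounded below by `(1/k!) ∏ A_{ij}` along any directed
cycle of length `k` (which is a positive quantity). -/
theorem acyclicity_penalty_properties {d : ℕ} (A : Matrix (Fin d) (Fin d) ℝ)
    (hA : ∀ i j, 0 ≤ A i j) :
    0 ≤ Matrix.trace (NormedSpace.exp A) - d ∧
    (Matrix.trace (NormedSpace.exp A) - d = 0 ↔ DiGraphAcyclic (fun i j => 0 < A i j)) ∧
    ∀ (k : ℕ) (v : ℕ → Fin d), 1 ≤ k → v k = v 0 →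
      (∀ i < k, 0 < A (v i) (v (i + 1))) →
      (0 < (∏ i ∈ Finset.range k, A (v i) (v (i + 1))) / (k.factorial : ℝ) ∧
        (∏ i ∈ Finset.range k, A (v i) (v (i + 1))) / (k.factorial : ℝ) ≤
          Matrix.trace (NormedSpace.exp A) - d) := by
  letI : SeminormedRing (Matrix (Fin d) (Fin d) ℝ) := Matrix.linftyOpSemiNormedRing
  letI : NormedRing (Matrix (Fin d) (Fin d) ℝ) := Matrix.linftyOpNormedRing
  letI : NormedAlgebra ℝ (Matrix (Fin d) (Fin d) ℝ) := Matrix.linftyOpNormedAlgebra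
  set c : ℕ → ℝ := fun n => ((n.factorial : ℝ))⁻¹ * Matrix.trace (A ^ n) with hc
  have hsum : HasSum (fun n => ((n.factorial : ℝ))⁻¹ • A ^ n) (NormedSpace.exp A) :=
    NormedSpace.exp_series_hasSum_exp' A
  have htr : HasSum c (Matrix.trace (NormedSpace.exp A)) := by
    have := hsum.map (Matrix.traceAddMonoidHom (Fin d) ℝ) (by
      have : Continuous fun M : Matrix (Fin d) (Fin d) ℝ => Matrix.trace M := by
        apply continuous_finset_sum
        intro i _
        exact ((continuous_apply i).comp (continuous_apply i))
      exact this)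
    have heq : ((Matrix.traceAddMonoidHom (Fin d) ℝ) ∘ fun n : ℕ =>
        ((n.factorial : ℝ))⁻¹ • A ^ n) = c := by
      funext n
      simp [hc, Matrix.traceAddMonoidHom, Matrix.trace_smul, smul_eq_mul]
    rw [heq] at this
    simpa [Matrix.traceAddMonoidHom] using this
  have hc0 : c 0 = d := by simp [hc]
  have hcnn : ∀ n, 0 ≤ c n := fun n =>
    mul_nonneg (by positivity) (Finset.sum_nonneg fun i _ => pow_entry_nonneg A hA n i i)
  have htail : HasSum (fun n => c (n + 1)) (Matrix.trace (NormedSpace.exp A) - d) := by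
    have := (hasSum_nat_add_iff' (f := c) 1).mpr htr
    simpa [hc0] using this
  have hnonneg : 0 ≤ Matrix.trace (NormedSpace.exp A) - d :=
    htail.tsum_eq ▸ tsum_nonneg fun n => hcnn (n + 1)
  -- cycle lower bound
  have hcycle : ∀ (k : ℕ) (v : ℕ → Fin d), 1 ≤ k → v k = v 0 →
      (∀ i < k, 0 < A (v i) (v (i + 1))) →
      (0 < (∏ i ∈ Finset.range k, A (v i) (v (i + 1))) / (k.factorial : ℝ) ∧
        (∏ i ∈ Finset.range k, A (v i) (v (i + 1))) / (k.factorial : ℝ) ≤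
          Matrix.trace (NormedSpace.exp A) - d) := by
    intro k v hk hvk hvw
    have hprodpos : 0 < ∏ i ∈ Finset.range k, A (v i) (v (i + 1)) :=
      Finset.prod_pos fun i hi => hvw i (Finset.mem_range.mp hi)
    have hfac : (0 : ℝ) < k.factorial := by positivity
    constructor
    · positivity
    · have hck : (∏ i ∈ Finset.range k, A (v i) (v (i + 1))) / (k.factorial : ℝ) ≤ c k := by
        rw [hc, div_eq_inv_mul]
        apply mul_le_mul_of_nonneg_left _ (by positivity)
        calc (∏ i ∈ Finset.range k, A (v i) (v (i + 1))) ≤ (A ^ k) (v 0) (v k) :=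
              prod_le_pow_entry A hA k v
          _ = (A ^ k) (v 0) (v 0) := by rw [hvk]
          _ ≤ Matrix.trace (A ^ k) :=
              Finset.single_le_sum (f := fun i => (A ^ k) i i)
                (fun i _ => pow_entry_nonneg A hA k i i) (Finset.mem_univ (v 0))
      have hle : c k ≤ Matrix.trace (NormedSpace.exp A) - d := by
        obtain ⟨m, rfl⟩ := Nat.exists_eq_add_of_le hk
        have := Summable.le_tsum htail.summable m (fun n _ => hcnn (n + 1))
        rw [htail.tsum_eq] at this
        simpa [Nat.add_comm] using this
      linarith
  refine ⟨hnonneg, ⟨?_, ?_⟩, hcycle⟩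
  · intro h0
    intro ⟨k, v, hk, hvk, hvw⟩
    obtain ⟨hpos, hle⟩ := hcycle k v hk hvk hvw
    rw [h0] at hle
    linarith
  · intro hacyclic
    have hzero : ∀ n, c (n + 1) = 0 := by
      intro n
      have htr0 : Matrix.trace (A ^ (n + 1)) = 0 := by
        apply Finset.sum_eq_zero
        intro i _
        by_contra hne
        have hpos : 0 < (A ^ (n + 1)) i i :=
          lt_of_le_of_ne (pow_entry_nonneg A hA (n + 1) i i) (Ne.symm hne)
        obtain ⟨v, hv0, hvn, hvw⟩ := pos_pow_entry_walk A hA (n + 1) i i hpos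
        exact hacyclic ⟨n + 1, v, Nat.succ_le_succ (Nat.zero_le n), by rw [hv0, hvn], hvw⟩
      simp [hc, htr0]
    have : HasSum (fun n => c (n + 1)) 0 := by
      rw [funext hzero]; exact hasSum_zero
    exact htail.unique this
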